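/- Inscribed Angle Theorem (supplementary angles): If a, b, c, c' lie on a common circle in ℝ² with c and c' on opposite open arcs determined by a and b, then ∠acb + ∠ac'b = π. -/

import Mathlib

open Real EuclideanGeometry

private lemma inscribed_aux (θ θ' : Real.Angle) (h2 : (2:ℤ) • θ = (2:ℤ) • θ')
    (hs : θ.sign = -θ'.sign) (hne : θ.sign ≠ 0) : |θ.toReal| + |θ'.toReal| = π := by
  rw [Real.Angle.two_zsmul_eq_iff] at h2
  rcases h2 with h | h
  · rw [h] at hs hne
    cases h' : θ'.sign <;> rw [h'] at hs hne <;> simp_all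
  · subst h
    have hne' : θ'.sign ≠ 0 := by
      intro h0; exact hne (by rw [Real.Angle.sign_add_pi, h0, neg_zero])
    rw [Real.Angle.sign_ne_zero_iff] at hne'
    have h1 : θ'.toReal ≠ 0 := fun h => hne'.1 (by rw [← θ'.coe_toReal, h]; simp)
    have h2' : θ'.toReal ≠ π := fun h => hne'.2 (by rw [← θ'.coe_toReal, h])
    have hlt := θ'.toReal_le_pi
    have hgt := θ'.neg_pi_lt_toReal
    rcases lt_or_gt_of_ne h1 with hneg | hpos
    · have heq : (θ' + π).toReal = θ'.toReal + π := by
        nth_rewrite 1 [← θ'.coe_toReal]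
        rw [← Real.Angle.coe_add,
          Real.Angle.toReal_coe_eq_self_iff.mpr ⟨by linarith, by linarith⟩]
      rw [heq, abs_of_pos (by linarith), abs_of_neg hneg]; ring
    · have hlt' : θ'.toReal < π := lt_of_le_of_ne hlt h2'
      have heq : (θ' + π).toReal = θ'.toReal - π := by
        nth_rewrite 1 [← θ'.coe_toReal]
        rw [← Real.Angle.coe_add]
        have : (↑(θ'.toReal + π) : Real.Angle) = ↑(θ'.toReal - π) := by
          rw [Real.Angle.angle_eq_iff_two_pi_dvd_sub]; exact ⟨1, by ring⟩
        rw [this, Real.Angle.toReal_coe_eq_self_iff.mpr ⟨by linarith, by linarith⟩]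
      rw [heq, abs_of_pos hpos, abs_of_neg (by linarith)]; ring

/-- Inscribed Angle Theorem (supplementary angles): four points on a common circle
with `c` and `c'` strictly on opposite sides of the chord `a b` (opposite open arcs)
span supplementary angles over the chord. -/
theorem inscribed_angle_add_eq_pi_of_oppSide
    (a b c c' o : EuclideanSpace ℝ (Fin 2)) (r : ℝ)
    (ha : dist a o = r) (hb : dist b o = r) (hc : dist c o = r) (hc' : dist c' o = r)
    (hside : AffineSubspace.SOppSide (affineSpan ℝ ({a, b} : Set (EuclideanSpace ℝ (Fin 2)))) c c') :
    EuclideanGeometry.angle a c b + EuclideanGeometry.angle a c' b = π := by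
  haveI : Fact (Module.finrank ℝ (EuclideanSpace ℝ (Fin 2)) = 2) := ⟨finrank_euclideanSpace_fin⟩
  haveI : Module.Oriented ℝ (EuclideanSpace ℝ (Fin 2)) (Fin 2) :=
    ⟨Module.Basis.orientation (EuclideanSpace.basisFun (Fin 2) ℝ).toBasis⟩
  have hma : a ∈ affineSpan ℝ ({a, b} : Set (EuclideanSpace ℝ (Fin 2))) :=
    mem_affineSpan ℝ (by simp)
  have hmb : b ∈ affineSpan ℝ ({a, b} : Set (EuclideanSpace ℝ (Fin 2))) :=
    mem_affineSpan ℝ (by simp)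
  have hca : c ≠ a := fun h => hside.left_notMem (h ▸ hma)
  have hcb : c ≠ b := fun h => hside.left_notMem (h ▸ hmb)
  have hc'a : c' ≠ a := fun h => hside.right_notMem (h ▸ hma)
  have hc'b : c' ≠ b := fun h => hside.right_notMem (h ▸ hmb)
  have hcos : Cospherical ({a, c, c', b} : Set (EuclideanSpace ℝ (Fin 2))) := by
    refine ⟨o, r, ?_⟩
    rintro p (rfl | rfl | rfl | rfl) <;> assumption
  have hab : a ≠ b := by
    rintro rfl
    obtain ⟨p, hp, hsbtw⟩ := hside.exists_sbtw
    have hcc' : c ≠ c' := by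
      rintro rfl
      exact hsbtw.ne_left ((wbtw_self_iff (R := ℝ)).mp hsbtw.wbtw)
    have hcol : Collinear ℝ ({c, p, c'} : Set (EuclideanSpace ℝ (Fin 2))) := hsbtw.wbtw.collinear
    have hpa : p = a := by
      have h1 : ({a, a} : Set (EuclideanSpace ℝ (Fin 2))) = {a} := by simp
      rw [h1] at hp
      simpa using hp
    subst hpa
    have hsub : ({c, p, c'} : Set (EuclideanSpace ℝ (Fin 2))) ⊆ {p, c, c', p} := by
      intro x hx; simp at hx ⊢; tauto
    have hind := (hcos.subset hsub).affineIndependent_of_ne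
      (p₁ := c) (p₂ := p) (p₃ := c') hca hcc' hc'a.symm
    rw [affineIndependent_iff_not_collinear_set] at hind
    exact hind hcol
  have hsign := AffineSubspace.SOppSide.oangle_sign_eq_neg hma hmb hside
  have h2 := EuclideanGeometry.Cospherical.two_zsmul_oangle_eq hcos hca hcb hc'a hc'b
  have hnz : (∡ a c' b).sign ≠ 0 := by
    rw [Ne, EuclideanGeometry.oangle_sign_eq_zero_iff_collinear]
    intro hcol
    exact hside.right_notMem
      (hcol.mem_affineSpan_of_mem_of_ne (Set.mem_insert _ _) (by simp) (by simp) hab)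
  have key := inscribed_aux _ _ h2 (by rw [hsign, neg_neg])
    (fun h0 => hnz (by rw [hsign, h0, neg_zero]))
  rwa [EuclideanGeometry.angle_eq_abs_oangle_toReal hca.symm hcb.symm,
    EuclideanGeometry.angle_eq_abs_oangle_toReal hc'a.symm hc'b.symm]
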